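/- For all real numbers b, all μ > 0, σ > 0, and all real α > 1, one has (Φ(b/(μσ)))^(α-1) · Φ((b-αμ)/(μσ)) ≤ (Φ((b-μ)/(μσ)))^α, where powers are real powers (well-defined since Φ is strictly positive). -/

import Mathlib

open MeasureTheory Real Filter

/-- The standard normal cumulative distribution function
`Φ(x) = (√(2π))⁻¹ ∫_{-∞}^x exp(-t²/2) dt`. -/
noncomputable def stdNormalCDF (x : ℝ) : ℝ :=
  (Real.sqrt (2 * Real.pi))⁻¹ * ∫ t in Set.Iic x, Real.exp (-t ^ 2 / 2)

/-- The standard normal density `φ(x) = (√(2π))⁻¹ exp(-x²/2)`. -/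
noncomputable def stdNormalPDF (x : ℝ) : ℝ :=
  (Real.sqrt (2 * Real.pi))⁻¹ * Real.exp (-x ^ 2 / 2)

lemma gauss_integrable : Integrable (fun t : ℝ => Real.exp (-t ^ 2 / 2)) := by
  have h : (fun t : ℝ => Real.exp (-t ^ 2 / 2)) =
      fun t : ℝ => Real.exp (-(1/2 : ℝ) * t ^ 2) := by
    funext t; ring_nf
  rw [h]
  exact integrable_exp_neg_mul_sq (by norm_num)

lemma gauss_mul_integrable : Integrable (fun t : ℝ => t * Real.exp (-t ^ 2 / 2)) := by
  have h : (fun t : ℝ => t * Real.exp (-t ^ 2 / 2)) =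
      fun t : ℝ => t * Real.exp (-(1/2 : ℝ) * t ^ 2) := by
    funext t; ring_nf
  rw [h]
  exact integrable_mul_exp_neg_mul_sq (by norm_num)

lemma sqrt_two_pi_pos : 0 < Real.sqrt (2 * Real.pi) :=
  Real.sqrt_pos.2 (by positivity)

lemma pdf_pos (x : ℝ) : 0 < stdNormalPDF x := by
  unfold stdNormalPDF
  positivity

lemma cdf_pos (x : ℝ) : 0 < stdNormalCDF x := by
  unfold stdNormalCDF
  apply mul_pos (inv_pos.2 sqrt_two_pi_pos)
  rw [setIntegral_pos_iff_support_of_nonneg_ae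
    (Filter.Eventually.of_forall fun t => (Real.exp_pos _).le)
    gauss_integrable.integrableOn]
  have hsupp : (Function.support fun t : ℝ => Real.exp (-t ^ 2 / 2)) = Set.univ := by
    ext t; simp [Function.support, Real.exp_ne_zero]
  rw [hsupp, Set.univ_inter, Real.volume_Iic]
  exact ENNReal.zero_lt_top

lemma hasDerivAt_cdf (x : ℝ) : HasDerivAt stdNormalCDF (stdNormalPDF x) x := by
  have hrepr : stdNormalCDF = fun y =>
      (Real.sqrt (2 * Real.pi))⁻¹ *
        ((∫ t in (0:ℝ)..y, Real.exp (-t ^ 2 / 2)) +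
          ∫ t in Set.Iic (0:ℝ), Real.exp (-t ^ 2 / 2)) := by
    funext y
    unfold stdNormalCDF
    congr 1
    have := intervalIntegral.integral_Iic_sub_Iic
      (μ := volume) (f := fun t : ℝ => Real.exp (-t ^ 2 / 2)) (a := (0:ℝ)) (b := y)
      gauss_integrable.integrableOn gauss_integrable.integrableOn
    linarith
  have h1 : HasDerivAt (fun y => ∫ t in (0:ℝ)..y, Real.exp (-t ^ 2 / 2))
      (Real.exp (-x ^ 2 / 2)) x := by
    refine intervalIntegral.integral_hasDerivAt_right
      gauss_integrable.intervalIntegrable ?_ ?_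
    · exact (Continuous.stronglyMeasurableAtFilter (by continuity) _ _)
    · exact (Continuous.continuousAt (by continuity))
  rw [hrepr]
  have h2 := ((h1.add_const (∫ t in Set.Iic (0:ℝ), Real.exp (-t ^ 2 / 2))).const_mul
    ((Real.sqrt (2 * Real.pi))⁻¹))
  simpa [stdNormalPDF] using h2

lemma hasDerivAt_gauss (x : ℝ) :
    HasDerivAt (fun t : ℝ => Real.exp (-t ^ 2 / 2)) (-x * Real.exp (-x ^ 2 / 2)) x := by
  have h : HasDerivAt (fun t : ℝ => -t ^ 2 / 2) (-x) x := by
    have := ((hasDerivAt_pow 2 x).neg.div_const 2)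
    simpa using this.congr_deriv (by ring)
  simpa [mul_comm] using h.exp

lemma hasDerivAt_pdf (x : ℝ) : HasDerivAt stdNormalPDF (-x * stdNormalPDF x) x := by
  have h2 := (hasDerivAt_gauss x).const_mul ((Real.sqrt (2 * Real.pi))⁻¹)
  have heq : (Real.sqrt (2 * Real.pi))⁻¹ * (-x * Real.exp (-x ^ 2 / 2))
      = -x * stdNormalPDF x := by unfold stdNormalPDF; ring
  rw [heq] at h2
  exact h2

/-- The key Mills-ratio style inequality: `φ(x) + x Φ(x) ≥ 0`. -/
lemma pdf_add_mul_cdf_nonneg (x : ℝ) : 0 ≤ stdNormalPDF x + x * stdNormalCDF x := by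
  rcases le_or_gt 0 x with hx | hx
  · have := (pdf_pos x).le
    have := (cdf_pos x).le
    positivity
  · -- x < 0 : show  -x * Φ(x) ≤ φ(x), using Φ(x) ≤ φ(x)/(-x)
    have hFTC : ∫ t in Set.Iic x, (-t * Real.exp (-t ^ 2 / 2)) = Real.exp (-x ^ 2 / 2) := by
      have hbot : Tendsto (fun t : ℝ => Real.exp (-t ^ 2 / 2)) atBot (nhds 0) := by
        have h1 : Tendsto (fun t : ℝ => t ^ 2) atBot atTop := by
          have := (tendsto_pow_atTop (α := ℝ) (n := 2) (by norm_num)).comp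
            (tendsto_neg_atBot_atTop (G := ℝ))
          exact this.congr fun t => by simp [Function.comp]
        have h2 : Tendsto (fun t : ℝ => -t ^ 2 / 2) atBot atBot := by
          apply Filter.Tendsto.atBot_div_const (by norm_num)
          exact tendsto_neg_atTop_atBot.comp h1
        exact Real.tendsto_exp_atBot.comp h2
      have hint : IntegrableOn (fun t : ℝ => -t * Real.exp (-t ^ 2 / 2)) (Set.Iic x) := by
        have := (gauss_mul_integrable.neg).integrableOn (s := Set.Iic x)
        refine this.congr_fun (fun t _ => by simp only [Pi.neg_apply]; ring) measurableSet_Iic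
      have := integral_Iic_of_hasDerivAt_of_tendsto'
        (f := fun t : ℝ => Real.exp (-t ^ 2 / 2))
        (f' := fun t : ℝ => -t * Real.exp (-t ^ 2 / 2)) (a := x) (m := 0)
        (fun t _ => hasDerivAt_gauss t) hint hbot
      simpa using this
    -- monotone comparison of integrands on Iic x
    have hmono : ∫ t in Set.Iic x, Real.exp (-t ^ 2 / 2) ≤
        ∫ t in Set.Iic x, (-x)⁻¹ * (-t * Real.exp (-t ^ 2 / 2)) := by
      apply setIntegral_mono_on gauss_integrable.integrableOn
      · have := (gauss_mul_integrable.neg.const_mul ((-x)⁻¹)).integrableOn (s := Set.Iic x)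
        refine this.congr_fun (fun t _ => by simp only [Pi.neg_apply]; ring) measurableSet_Iic
      · exact measurableSet_Iic
      · intro t ht
        have ht' : t ≤ x := ht
        have h1 : 1 ≤ (-x)⁻¹ * (-t) := by
          rw [inv_mul_eq_div, le_div_iff₀ (by linarith)]
          linarith
        nlinarith [Real.exp_pos (-t ^ 2 / 2), mul_le_mul_of_nonneg_right h1
          (Real.exp_pos (-t ^ 2 / 2)).le]
    rw [integral_const_mul, hFTC] at hmono
    have hc : (0:ℝ) < (Real.sqrt (2 * Real.pi))⁻¹ := inv_pos.2 sqrt_two_pi_pos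
    have hΦ : stdNormalCDF x ≤ (Real.sqrt (2 * Real.pi))⁻¹ * ((-x)⁻¹ * Real.exp (-x ^ 2 / 2)) := by
      unfold stdNormalCDF
      exact mul_le_mul_of_nonneg_left hmono hc.le
    have hxpos : (0:ℝ) < -x := by linarith
    have : -x * stdNormalCDF x ≤ stdNormalPDF x := by
      calc -x * stdNormalCDF x
          ≤ -x * ((Real.sqrt (2 * Real.pi))⁻¹ * ((-x)⁻¹ * Real.exp (-x ^ 2 / 2))) :=
            mul_le_mul_of_nonneg_left hΦ hxpos.le
        _ = stdNormalPDF x := by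
            unfold stdNormalPDF
            have hxne : x ≠ 0 := ne_of_lt hx
            field_simp
    linarith

lemma hasDerivAt_logCDF (x : ℝ) :
    HasDerivAt (fun y => Real.log (stdNormalCDF y)) (stdNormalPDF x / stdNormalCDF x) x :=
  (hasDerivAt_cdf x).log (cdf_pos x).ne'

lemma logCDF_concave : ConcaveOn ℝ Set.univ (fun y => Real.log (stdNormalCDF y)) := by
  have hdiff : Differentiable ℝ (fun y => Real.log (stdNormalCDF y)) :=
    fun x => (hasDerivAt_logCDF x).differentiableAt
  apply Antitone.concaveOn_univ_of_deriv hdiff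
  have hderiv : deriv (fun y => Real.log (stdNormalCDF y)) =
      fun x => stdNormalPDF x / stdNormalCDF x :=
    funext fun x => (hasDerivAt_logCDF x).deriv
  rw [hderiv]
  have hratio : ∀ x : ℝ, HasDerivAt (fun y => stdNormalPDF y / stdNormalCDF y)
      ((-x * stdNormalPDF x * stdNormalCDF x - stdNormalPDF x * stdNormalPDF x)
        / (stdNormalCDF x) ^ 2) x :=
    fun x => (hasDerivAt_pdf x).div (hasDerivAt_cdf x) (cdf_pos x).ne'
  apply antitone_of_deriv_nonpos (fun x => (hratio x).differentiableAt)
  intro x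
  rw [(hratio x).deriv]
  apply div_nonpos_of_nonpos_of_nonneg _ (sq_nonneg _)
  nlinarith [pdf_pos x, cdf_pos x, pdf_add_mul_cdf_nonneg x]

/-- Second inequality of Theorem 4.2:
`Φ(b/(μσ))^(α-1) · Φ((b-αμ)/(μσ)) ≤ Φ((b-μ)/(μσ))^α` (real powers). -/
theorem cdf_inequality_second (b μ σ α : ℝ) (hμ : 0 < μ) (hσ : 0 < σ) (hα : 1 < α) :
    stdNormalCDF (b / (μ * σ)) ^ (α - 1) *
      stdNormalCDF ((b - α * μ) / (μ * σ)) ≤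
    stdNormalCDF ((b - μ) / (μ * σ)) ^ α := by
  have hs : 0 < μ * σ := mul_pos hμ hσ
  have hα0 : 0 < α := by linarith
  set X := b / (μ * σ) with hX
  set Y := (b - α * μ) / (μ * σ) with hY
  set Z := (b - μ) / (μ * σ) with hZ
  set L := fun y : ℝ => Real.log (stdNormalCDF y) with hLdef
  have hconc := logCDF_concave.2 (Set.mem_univ X) (Set.mem_univ Y)
    (show (0:ℝ) ≤ (α - 1) / α by apply div_nonneg <;> linarith)
    (show (0:ℝ) ≤ α⁻¹ by positivity)
    (show (α - 1) / α + α⁻¹ = 1 by field_simp; ring)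
  have hcomb : ((α - 1) / α) • X + α⁻¹ • Y = Z := by
    rw [smul_eq_mul, smul_eq_mul, hX, hY, hZ]
    field_simp
    ring
  rw [hcomb] at hconc
  simp only [smul_eq_mul] at hconc
  have key : (α - 1) * L X + L Y ≤ α * L Z := by
    have h1 : α * ((α - 1) / α * L X + α⁻¹ * L Y) = (α - 1) * L X + L Y := by
      field_simp
    calc (α - 1) * L X + L Y = α * ((α - 1) / α * L X + α⁻¹ * L Y) := h1.symm
      _ ≤ α * L Z := mul_le_mul_of_nonneg_left hconc hα0.le
  have hx := cdf_pos X
  have hy := cdf_pos Y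
  have hz := cdf_pos Z
  rw [Real.rpow_def_of_pos hx, Real.rpow_def_of_pos hz, ← Real.exp_log hy,
    ← Real.exp_add, Real.exp_le_exp]
  have : L X = Real.log (stdNormalCDF X) := rfl
  simp only [hLdef] at key
  linarith
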